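/- Fix z ∈ ℂ, d ∈ ℝ, ν ∈ ℤ, and for a real 2×2 matrix g with det g > 0 define Φ_ν(g) = (det g)^d · ( det g / (g₂₁² + g₂₂²) )^{z/2} · ( (g₂₂ - i·g₂₁) / √(g₂₁² + g₂₂²) )^ν. Let H = [[1,0],[0,-1]] and V = [[0,1],[1,0]]. Then for every real 2×2 matrix g with det g > 0, (d/ds)|_{s=0} Φ_ν( g·exp(sH) ) + i · (d/ds)|_{s=0} Φ_ν( g·exp(sV) ) = (z + ν) · Φ_{ν+2}(g), where Φ_{ν+2} is defined by the same formula with ν replaced by ν+2 (and the same z, d). -/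

import Mathlib

open Matrix Complex

/-- The K-finite vector of weight `ν` in the principal series of `GL₂(ℝ)⁺`:
`Φ_ν(g) = (det g)^d · (det g/(g₂₁²+g₂₂²))^{z/2} · ((g₂₂ - i g₂₁)/√(g₂₁²+g₂₂²))^ν`. -/
noncomputable def Phi (z : ℂ) (d : ℝ) (ν : ℤ) (g : Matrix (Fin 2) (Fin 2) ℝ) : ℂ :=
  ((g.det ^ d : ℝ) : ℂ) *
    ((g.det / (g 1 0 ^ 2 + g 1 1 ^ 2) : ℝ) : ℂ) ^ (z / 2) *
    (((g 1 1 : ℂ) - Complex.I * (g 1 0 : ℂ)) /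
        ((Real.sqrt (g 1 0 ^ 2 + g 1 1 ^ 2) : ℝ) : ℂ)) ^ ν



open Matrix Complex

lemma matH (s : ℝ) :
    NormedSpace.exp (s • (!![1, 0; 0, -1] : Matrix (Fin 2) (Fin 2) ℝ)) =
      !![Real.exp s, 0; 0, Real.exp (-s)] := by
  have h1 : s • (!![1, 0; 0, -1] : Matrix (Fin 2) (Fin 2) ℝ) =
      Matrix.diagonal ![s, -s] := by
    ext i j; fin_cases i <;> fin_cases j <;>
      simp [Matrix.diagonal, Matrix.smul_apply] <;> ring
  rw [h1, Matrix.exp_diagonal]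
  ext i j
  fin_cases i <;> fin_cases j <;>
    simp [Matrix.diagonal, ← Real.exp_eq_exp_ℝ, Pi.exp_def]

lemma matV (s : ℝ) :
    NormedSpace.exp (s • (!![0, 1; 1, 0] : Matrix (Fin 2) (Fin 2) ℝ)) =
      !![Real.cosh s, Real.sinh s; Real.sinh s, Real.cosh s] := by
  have hmul : (!![1, 1; 1, -1] : Matrix (Fin 2) (Fin 2) ℝ) * !![1/2, 1/2; 1/2, -(1/2)] = 1 := by
    rw [Matrix.mul_fin_two]; norm_num [Matrix.one_fin_two]; ext i j; fin_cases i <;> fin_cases j <;> simp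
  have hU : IsUnit (!![1, 1; 1, -1] : Matrix (Fin 2) (Fin 2) ℝ) := by
    rw [Matrix.isUnit_iff_isUnit_det, Matrix.det_fin_two_of]
    norm_num
  have hinv : (!![1, 1; 1, -1] : Matrix (Fin 2) (Fin 2) ℝ)⁻¹ = !![1/2, 1/2; 1/2, -(1/2)] :=
    Matrix.inv_eq_right_inv hmul
  have key : s • (!![0, 1; 1, 0] : Matrix (Fin 2) (Fin 2) ℝ) =
      !![1, 1; 1, -1] * (s • (!![1, 0; 0, -1] : Matrix (Fin 2) (Fin 2) ℝ)) *
        (!![1, 1; 1, -1] : Matrix (Fin 2) (Fin 2) ℝ)⁻¹ := by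
    rw [hinv]
    ext i j
    fin_cases i <;> fin_cases j <;>
      simp [Matrix.mul_apply, Fin.sum_univ_two, Matrix.smul_apply] <;> ring
  rw [key, Matrix.exp_conj _ _ hU, matH, hinv]
  ext i j
  fin_cases i <;> fin_cases j <;>
    simp [Matrix.mul_apply, Fin.sum_univ_two, Real.cosh_eq, Real.sinh_eq] <;> ring

lemma row_pos {g : Matrix (Fin 2) (Fin 2) ℝ} (hg : 0 < g.det) :
    0 < g 1 0 ^ 2 + g 1 1 ^ 2 := by
  by_contra h
  push_neg at h
  have h0 : g 1 0 = 0 := by nlinarith [sq_nonneg (g 1 0), sq_nonneg (g 1 1)]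
  have h1 : g 1 1 = 0 := by nlinarith [sq_nonneg (g 1 0), sq_nonneg (g 1 1)]
  rw [Matrix.det_fin_two, h0, h1] at hg
  simp at hg

lemma Phi_form (z : ℂ) (d : ℝ) (ν : ℤ) (g : Matrix (Fin 2) (Fin 2) ℝ) (hg : 0 < g.det) :
    Phi z d ν g = (((g.det ^ d : ℝ) : ℂ) * Complex.exp ((z / 2) * (Real.log g.det : ℝ))) *
      (Complex.exp (-((z + ν) / 2) * (Real.log (g 1 0 ^ 2 + g 1 1 ^ 2) : ℝ)) *
        ((g 1 1 : ℂ) - Complex.I * g 1 0) ^ ν) := by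
  have hn : 0 < g 1 0 ^ 2 + g 1 1 ^ 2 := row_pos hg
  have hDn : (0:ℝ) < g.det / (g 1 0 ^ 2 + g 1 1 ^ 2) := div_pos hg hn
  have hs : (0:ℝ) < Real.sqrt (g 1 0 ^ 2 + g 1 1 ^ 2) := Real.sqrt_pos.2 hn
  have hA : ((g.det / (g 1 0 ^ 2 + g 1 1 ^ 2) : ℝ) : ℂ) ^ (z / 2)
      = Complex.exp ((z / 2) * (Real.log g.det : ℝ)) *
        Complex.exp (-(z / 2) * (Real.log (g 1 0 ^ 2 + g 1 1 ^ 2) : ℝ)) := by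
    rw [Complex.cpow_def_of_ne_zero (by exact_mod_cast hDn.ne'),
      ← Complex.ofReal_log hDn.le, Real.log_div hg.ne' hn.ne', ← Complex.exp_add]
    push_cast
    ring_nf
  have hB : (((Real.sqrt (g 1 0 ^ 2 + g 1 1 ^ 2) : ℝ) : ℂ)) ^ ν
      = Complex.exp (((ν : ℂ) / 2) * (Real.log (g 1 0 ^ 2 + g 1 1 ^ 2) : ℝ)) := by
    rw [← Complex.ofReal_zpow]
    have h1 : Real.sqrt (g 1 0 ^ 2 + g 1 1 ^ 2) ^ ν
        = Real.exp (Real.log (g 1 0 ^ 2 + g 1 1 ^ 2) / 2 * ν) := by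
      rw [← Real.rpow_intCast, Real.rpow_def_of_pos hs, Real.log_sqrt hn.le]
    rw [h1, Complex.ofReal_exp]
    push_cast
    ring_nf
  rw [Phi, hA, div_zpow, hB]
  rw [div_eq_mul_inv (((g 1 1 : ℂ) - Complex.I * g 1 0) ^ ν), ← Complex.exp_neg,
    show -((z + (ν:ℂ)) / 2) * ((Real.log (g 1 0 ^ 2 + g 1 1 ^ 2) : ℝ) : ℂ)
        = -(z / 2) * ((Real.log (g 1 0 ^ 2 + g 1 1 ^ 2) : ℝ) : ℂ) +
          -((ν : ℂ) / 2 * ((Real.log (g 1 0 ^ 2 + g 1 1 ^ 2) : ℝ) : ℂ)) by ring,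
    Complex.exp_add]
  ring

lemma main_deriv (μ : ℂ) (ν : ℤ) {cf ef : ℝ → ℝ} {c' e' : ℝ}
    (hc : HasDerivAt cf c' 0) (he : HasDerivAt ef e' 0)
    (hn : (0:ℝ) < cf 0 ^ 2 + ef 0 ^ 2) :
    HasDerivAt (fun s => Complex.exp (μ * (Real.log (cf s ^ 2 + ef s ^ 2) : ℝ)) *
        ((ef s : ℂ) - Complex.I * cf s) ^ ν)
      (Complex.exp (μ * (Real.log (cf 0 ^ 2 + ef 0 ^ 2) : ℝ)) *
        (μ * (((2 * cf 0 * c' + 2 * ef 0 * e') / (cf 0 ^ 2 + ef 0 ^ 2) : ℝ) : ℂ) *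
            ((ef 0 : ℂ) - Complex.I * cf 0) ^ ν
          + (ν : ℂ) * ((ef 0 : ℂ) - Complex.I * cf 0) ^ (ν - 1) *
            ((e' : ℂ) - Complex.I * c'))) 0 := by
  have hw0 : ((ef 0 : ℂ) - Complex.I * cf 0) ≠ 0 := by
    intro h
    have h1 : (ef 0 : ℂ) = Complex.I * cf 0 := sub_eq_zero.mp h
    have h2 := congrArg Complex.re h1
    have h3 := congrArg Complex.im h1
    simp at h2 h3
    nlinarith
  have hnfun : HasDerivAt (fun s => cf s ^ 2 + ef s ^ 2)
      (2 * cf 0 * c' + 2 * ef 0 * e') 0 := by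
    have h1 := (hc.pow 2).add (he.pow 2)
    exact h1.congr_deriv (by push_cast; ring)
  have hL := hnfun.log hn.ne'
  have hE : HasDerivAt (fun s => Complex.exp (μ * (Real.log (cf s ^ 2 + ef s ^ 2) : ℝ)))
      (Complex.exp (μ * (Real.log (cf 0 ^ 2 + ef 0 ^ 2) : ℝ)) *
        (μ * (((2 * cf 0 * c' + 2 * ef 0 * e') / (cf 0 ^ 2 + ef 0 ^ 2) : ℝ) : ℂ))) 0 :=
    (hL.ofReal_comp.const_mul μ).cexp
  have hwf : HasDerivAt (fun s => (ef s : ℂ) - Complex.I * cf s)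
      ((e' : ℂ) - Complex.I * c') 0 :=
    he.ofReal_comp.sub ((hc.ofReal_comp).const_mul Complex.I)
  have hzp : HasDerivAt (fun s => ((ef s : ℂ) - Complex.I * cf s) ^ ν)
      (((ν : ℂ) * ((ef 0 : ℂ) - Complex.I * cf 0) ^ (ν - 1)) *
        ((e' : ℂ) - Complex.I * c')) 0 := by
    have h := (hasDerivAt_zpow ν ((ef 0 : ℂ) - Complex.I * cf 0) (Or.inl hw0)).comp
      (x := (0:ℝ)) hwf
    exact h
  have := hE.mul hzp
  exact this.congr_deriv (by ring)

lemma final_alg (z μ : ℂ) (ν : ℤ) (K E A c e : ℂ) (hμ : μ = -((z + (ν:ℂ))/2))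
    (hn : c ^ 2 + e ^ 2 ≠ 0) :
    K * (E * (μ * ((2*c*c + 2*e*(-e))/(c^2+e^2)) * (A * (e - Complex.I*c))
        + (ν:ℂ) * A * (-e - Complex.I*c)))
      + Complex.I * (K * (E * (μ * ((2*c*e + 2*e*c)/(c^2+e^2)) * (A * (e - Complex.I*c))
        + (ν:ℂ) * A * (c - Complex.I*e))))
    = (z + (ν:ℂ)) * (K * (E * (c^2+e^2)⁻¹ *
        (A * ((e - Complex.I*c) * ((e - Complex.I*c) * (e - Complex.I*c)))))) := by
  rw [hμ]
  have hI := Complex.I_sq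
  field_simp
  ring_nf
  simp only [Complex.I_sq, show (Complex.I:ℂ)^3 = -Complex.I by
    rw [pow_succ, Complex.I_sq]; ring]
  ring_nf

/-- The raising operator `P₊ = H + i⊗V` acts on `Φ_ν` by
`(d/ds)|₀ Φ_ν(g·exp(sH)) + i·(d/ds)|₀ Φ_ν(g·exp(sV)) = (z+ν)·Φ_{ν+2}(g)`. -/
theorem stmt_11 (z : ℂ) (d : ℝ) (ν : ℤ) (g : Matrix (Fin 2) (Fin 2) ℝ) (hg : 0 < g.det) :
    ∃ a b : ℂ,
      HasDerivAt (fun s : ℝ =>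
        Phi z d ν (g * NormedSpace.exp (s • (!![1, 0; 0, -1] : Matrix (Fin 2) (Fin 2) ℝ)))) a 0 ∧
      HasDerivAt (fun s : ℝ =>
        Phi z d ν (g * NormedSpace.exp (s • (!![0, 1; 1, 0] : Matrix (Fin 2) (Fin 2) ℝ)))) b 0 ∧
      a + Complex.I * b = (z + (ν : ℂ)) * Phi z d (ν + 2) g := by
  have hn : 0 < g 1 0 ^ 2 + g 1 1 ^ 2 := row_pos hg
  set K : ℂ := ((g.det ^ d : ℝ) : ℂ) * Complex.exp ((z / 2) * (Real.log g.det : ℝ)) with hK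
  set μ : ℂ := -((z + ν) / 2) with hμ
  -- entry and determinant computations for the H path
  have hfunH : (fun s : ℝ =>
      Phi z d ν (g * NormedSpace.exp (s • (!![1, 0; 0, -1] : Matrix (Fin 2) (Fin 2) ℝ))))
      = fun s => K * (Complex.exp (μ *
          (Real.log ((g 1 0 * Real.exp s) ^ 2 + (g 1 1 * Real.exp (-s)) ^ 2) : ℝ)) *
          (((g 1 1 * Real.exp (-s) : ℝ) : ℂ) - Complex.I * ((g 1 0 * Real.exp s : ℝ) : ℂ)) ^ ν) := by
    funext s
    rw [matH s]
    have hdet : (g * !![Real.exp s, 0; 0, Real.exp (-s)]).det = g.det := by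
      rw [Matrix.det_mul, Matrix.det_fin_two_of, ← Real.exp_add]
      simp
    have h10 : (g * !![Real.exp s, 0; 0, Real.exp (-s)]) 1 0 = g 1 0 * Real.exp s := by
      simp [Matrix.mul_apply, Fin.sum_univ_two]
    have h11 : (g * !![Real.exp s, 0; 0, Real.exp (-s)]) 1 1 = g 1 1 * Real.exp (-s) := by
      simp [Matrix.mul_apply, Fin.sum_univ_two]
    rw [Phi_form z d ν _ (by rw [hdet]; exact hg), hdet, h10, h11]
  have hfunV : (fun s : ℝ =>
      Phi z d ν (g * NormedSpace.exp (s • (!![0, 1; 1, 0] : Matrix (Fin 2) (Fin 2) ℝ))))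
      = fun s => K * (Complex.exp (μ *
          (Real.log ((g 1 0 * Real.cosh s + g 1 1 * Real.sinh s) ^ 2
            + (g 1 0 * Real.sinh s + g 1 1 * Real.cosh s) ^ 2) : ℝ)) *
          (((g 1 0 * Real.sinh s + g 1 1 * Real.cosh s : ℝ) : ℂ)
            - Complex.I * ((g 1 0 * Real.cosh s + g 1 1 * Real.sinh s : ℝ) : ℂ)) ^ ν) := by
    funext s
    rw [matV s]
    have hdet : (g * !![Real.cosh s, Real.sinh s; Real.sinh s, Real.cosh s]).det = g.det := by
      rw [Matrix.det_mul, Matrix.det_fin_two_of]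
      nlinarith [Real.cosh_sq_sub_sinh_sq s]
    have h10 : (g * !![Real.cosh s, Real.sinh s; Real.sinh s, Real.cosh s]) 1 0
        = g 1 0 * Real.cosh s + g 1 1 * Real.sinh s := by
      simp [Matrix.mul_apply, Fin.sum_univ_two]
    have h11 : (g * !![Real.cosh s, Real.sinh s; Real.sinh s, Real.cosh s]) 1 1
        = g 1 0 * Real.sinh s + g 1 1 * Real.cosh s := by
      simp [Matrix.mul_apply, Fin.sum_univ_two]
    rw [Phi_form z d ν _ (by rw [hdet]; exact hg), hdet, h10, h11]
  -- derivatives of the entries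
  have hcH : HasDerivAt (fun s : ℝ => g 1 0 * Real.exp s) (g 1 0) 0 := by
    simpa using (Real.hasDerivAt_exp 0).const_mul (g 1 0)
  have heH : HasDerivAt (fun s : ℝ => g 1 1 * Real.exp (-s)) (-(g 1 1)) 0 := by
    simpa using ((hasDerivAt_neg (0:ℝ)).exp).const_mul (g 1 1)
  have hcV : HasDerivAt (fun s : ℝ => g 1 0 * Real.cosh s + g 1 1 * Real.sinh s) (g 1 1) 0 := by
    exact (((Real.hasDerivAt_cosh 0).const_mul (g 1 0)).add
      ((Real.hasDerivAt_sinh 0).const_mul (g 1 1))).congr_deriv (by simp)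
  have heV : HasDerivAt (fun s : ℝ => g 1 0 * Real.sinh s + g 1 1 * Real.cosh s) (g 1 0) 0 := by
    exact (((Real.hasDerivAt_sinh 0).const_mul (g 1 0)).add
      ((Real.hasDerivAt_cosh 0).const_mul (g 1 1))).congr_deriv (by simp)
  have hnH : (0:ℝ) < (g 1 0 * Real.exp 0) ^ 2 + (g 1 1 * Real.exp (-0)) ^ 2 := by
    simpa using hn
  have hnV : (0:ℝ) < (g 1 0 * Real.cosh 0 + g 1 1 * Real.sinh 0) ^ 2
      + (g 1 0 * Real.sinh 0 + g 1 1 * Real.cosh 0) ^ 2 := by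
    simpa using hn
  have HA := (main_deriv μ ν hcH heH hnH).const_mul K
  have HB := (main_deriv μ ν hcV heV hnV).const_mul K
  rw [hfunH, hfunV]
  refine ⟨_, _, HA, HB, ?_⟩
  -- the algebraic identity
  simp only [Real.exp_zero, neg_zero, Real.cosh_zero, Real.sinh_zero, mul_one, mul_zero,
    add_zero, zero_add]
  rw [Phi_form z d (ν + 2) g hg]
  rw [← hK]
  have hw0 : ((g 1 1 : ℂ) - Complex.I * (g 1 0 : ℂ)) ≠ 0 := by
    intro h
    have h1 : (g 1 1 : ℂ) = Complex.I * (g 1 0 : ℂ) := sub_eq_zero.mp h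
    have h2 := congrArg Complex.re h1
    have h3 := congrArg Complex.im h1
    simp at h2 h3
    nlinarith
  have hn0 : ((g 1 0 : ℂ)) ^ 2 + ((g 1 1 : ℂ)) ^ 2 ≠ 0 := by
    have h := hn.ne'
    have : ((g 1 0 ^ 2 + g 1 1 ^ 2 : ℝ) : ℂ) ≠ 0 := by exact_mod_cast h
    push_cast at this
    exact this
  have hexp : Complex.exp (-((z + ((ν + 2 : ℤ) : ℂ)) / 2) *
        ((Real.log (g 1 0 ^ 2 + g 1 1 ^ 2) : ℝ) : ℂ))
      = Complex.exp (μ * ((Real.log (g 1 0 ^ 2 + g 1 1 ^ 2) : ℝ) : ℂ)) *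
        (((g 1 0 ^ 2 + g 1 1 ^ 2 : ℝ) : ℂ))⁻¹ := by
    rw [show -((z + ((ν + 2 : ℤ) : ℂ)) / 2) * ((Real.log (g 1 0 ^ 2 + g 1 1 ^ 2) : ℝ) : ℂ)
        = μ * ((Real.log (g 1 0 ^ 2 + g 1 1 ^ 2) : ℝ) : ℂ)
          + (-((Real.log (g 1 0 ^ 2 + g 1 1 ^ 2) : ℝ) : ℂ)) by rw [hμ]; push_cast; ring,
      Complex.exp_add, Complex.exp_neg, ← Complex.ofReal_exp, Real.exp_log hn]
  have hzp1 : ((g 1 1 : ℂ) - Complex.I * (g 1 0 : ℂ)) ^ ν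
      = ((g 1 1 : ℂ) - Complex.I * (g 1 0 : ℂ)) ^ (ν - 1) *
        ((g 1 1 : ℂ) - Complex.I * (g 1 0 : ℂ)) := by
    rw [← zpow_add_one₀ hw0]
    congr 1
    ring
  have hzp3 : ((g 1 1 : ℂ) - Complex.I * (g 1 0 : ℂ)) ^ (ν + 2)
      = ((g 1 1 : ℂ) - Complex.I * (g 1 0 : ℂ)) ^ (ν - 1) *
        (((g 1 1 : ℂ) - Complex.I * (g 1 0 : ℂ)) * (((g 1 1 : ℂ) - Complex.I * (g 1 0 : ℂ)) *
          ((g 1 1 : ℂ) - Complex.I * (g 1 0 : ℂ)))) := by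
    rw [show ν + 2 = ν - 1 + 1 + 1 + 1 by ring, zpow_add_one₀ hw0, zpow_add_one₀ hw0,
      zpow_add_one₀ hw0]
    ring
  rw [hexp, hzp3, hzp1]
  push_cast
  linear_combination final_alg z μ ν K
    (Complex.exp (μ * ((Real.log (g 1 0 ^ 2 + g 1 1 ^ 2) : ℝ) : ℂ)))
    (((g 1 1 : ℂ) - Complex.I * (g 1 0 : ℂ)) ^ (ν - 1))
    ((g 1 0 : ℂ)) ((g 1 1 : ℂ)) hμ hn0
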